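/- Compatibility of weighted trace with local unitary action: let K ⊂ J ⊆ {1,…,n} and let U = U₁⊗⋯⊗Uₙ be a local unitary on (ℂ^q)^{⊗n}; set U_J = ⊗_{j∈J}Uⱼ and U_K = ⊗_{j∈K}Uⱼ. Then for every function T : ((ℤ/qℤ)²)^J × ((ℤ/qℤ)²)^J → ℂ[z], Λ(U_K)(tr^J_K T) = tr^J_K(Λ(U_J) T). -/

import Mathlib

set_option linter.unusedSectionVars false
set_option maxHeartbeats 1000000


open Matrix Polynomial
open scoped BigOperators ComplexConjugate Kronecker

noncomputable section

/-- Generalized Pauli `X` (cyclic shift) on `ℂ^q`. -/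
def Xmat (q : ℕ) : Matrix (Fin q) (Fin q) ℂ :=
  fun i j => if (i : ℕ) = ((j : ℕ) + 1) % q then 1 else 0

/-- Generalized Pauli `Z` (clock) on `ℂ^q`, `Z|j⟩ = ζ^j |j⟩` with `ζ = exp(2πi/q)`. -/
def Zmat (q : ℕ) : Matrix (Fin q) (Fin q) ℂ :=
  Matrix.diagonal fun j => Complex.exp (2 * (Real.pi : ℂ) * Complex.I / (q : ℂ)) ^ (j : ℕ)

/-- Single-qudit Pauli `E(a,b) = X^a Z^b` for a label `(a,b) ∈ (ℤ/qℤ)²`. -/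
def Epauli (q : ℕ) (p : ZMod q × ZMod q) : Matrix (Fin q) (Fin q) ℂ :=
  Xmat q ^ p.1.val * Zmat q ^ p.2.val

/-- Multi-qudit Pauli `E(p) = E(p₁) ⊗ ⋯ ⊗ E(pₙ)` on the space indexed by `ι → Fin q`. -/
def EV (q : ℕ) {ι : Type} [Fintype ι] (p : ι → ZMod q × ZMod q) :
    Matrix (ι → Fin q) (ι → Fin q) ℂ :=
  fun v w => ∏ i, Epauli q (p i) (v i) (w i)

/-- Weight of a Pauli label vector: the number of non-identity factors. -/
def wtL (q : ℕ) {ι : Type} [Fintype ι] (p : ι → ZMod q × ZMod q) : ℕ :=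
  (Finset.univ.filter fun i => p i ≠ 0).card

/-- Kronecker (tensor) product of a family of local `q × q` matrices. -/
def kron (q : ℕ) {ι : Type} [Fintype ι] (Us : ι → Matrix (Fin q) (Fin q) ℂ) :
    Matrix (ι → Fin q) (ι → Fin q) ℂ :=
  fun v w => ∏ i, Us i (v i) (w i)

/-- Coefficients `c(g,e) = q^{-|ι|} · Tr(E(g)† V† E(e) V)` of the adjoint action. -/
def cCoef (q : ℕ) {ι : Type} [Fintype ι] [DecidableEq ι]
    (V : Matrix (ι → Fin q) (ι → Fin q) ℂ) (g e : ι → ZMod q × ZMod q) : ℂ :=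
  ((q : ℂ) ^ Fintype.card ι)⁻¹ * Matrix.trace ((EV q g)ᴴ * Vᴴ * EV q e * V)

/-- Adjoint ("Bloch-sphere") action `Λ(V)` on polynomial-valued tensors. -/
def Lam (q : ℕ) [NeZero q] {ι : Type} [Fintype ι] [DecidableEq ι]
    (V : Matrix (ι → Fin q) (ι → Fin q) ℂ)
    (T : (ι → ZMod q × ZMod q) → (ι → ZMod q × ZMod q) → Polynomial ℂ)
    (e e' : ι → ZMod q × ZMod q) : Polynomial ℂ :=
  ∑ g, ∑ g', Polynomial.C ((starRingEnd ℂ) (cCoef q V g e) * cCoef q V g' e') * T g g'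

/-- Weighted trace `tr^J_K` taking a `J`-legged tensor enumerator to a `K`-legged one. -/
def trJK (q : ℕ) [NeZero q] {ι : Type} [Fintype ι] [DecidableEq ι] {J : Finset ι}
    (K : Finset ι) (hKJ : K ⊆ J)
    (T : ({j // j ∈ J} → ZMod q × ZMod q) → ({j // j ∈ J} → ZMod q × ZMod q) →
      Polynomial ℂ)
    (f f' : {j // j ∈ K} → ZMod q × ZMod q) : Polynomial ℂ :=
  ∑ e : {j // j ∈ J \ K} → ZMod q × ZMod q,
    Polynomial.X ^ wtL q e *
      T (fun j => if h : j.val ∈ K then f ⟨j.val, h⟩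
            else e ⟨j.val, Finset.mem_sdiff.mpr ⟨j.2, h⟩⟩)
        (fun j => if h : j.val ∈ K then f' ⟨j.val, h⟩
            else e ⟨j.val, Finset.mem_sdiff.mpr ⟨j.2, h⟩⟩)






-- ζ abbreviation
def zeta (q : ℕ) : ℂ := Complex.exp (2 * (Real.pi : ℂ) * Complex.I / (q : ℂ))

variable (q : ℕ) [NeZero q]

lemma zeta_prim : IsPrimitiveRoot (zeta q) q := Complex.isPrimitiveRoot_exp q (NeZero.ne q)

lemma zeta_pow_q : zeta q ^ q = 1 := (zeta_prim q).pow_eq_one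

lemma conj_zeta : conj (zeta q) = (zeta q)⁻¹ := by
  unfold zeta
  rw [← Complex.exp_conj, ← Complex.exp_neg]
  congr 1
  simp only [map_div₀, _root_.map_mul, Complex.conj_I, Complex.conj_ofReal,
    Complex.conj_natCast, map_ofNat]
  ring

lemma conj_zeta_pow (m : ℕ) : conj (zeta q ^ m) = (zeta q)⁻¹ ^ m := by
  rw [map_pow, conj_zeta]

lemma zeta_inv_pow_q : ((zeta q)⁻¹) ^ q = 1 := by
  rw [inv_pow, zeta_pow_q, inv_one]

lemma sum_fin_pow (w : ℂ) (hw : w ^ q = 1) :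
    ∑ i : Fin q, w ^ (i : ℕ) = if w = 1 then (q : ℂ) else 0 := by
  rw [Fin.sum_univ_eq_sum_range (fun m => w ^ m) q]
  by_cases h : w = 1
  · simp [h]
  · rw [if_neg h, geom_sum_eq h, hw]; simp

-- equiv Fin q ≃ ZMod q
def fz : Fin q ≃ ZMod q where
  toFun i := ((i : ℕ) : ZMod q)
  invFun x := ⟨x.val, x.val_lt⟩
  left_inv i := Fin.ext (by simp [ZMod.val_natCast_of_lt i.isLt])
  right_inv x := ZMod.natCast_rightInverse x

lemma sum_zmod_pow (w : ℂ) (hw : w ^ q = 1) :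
    ∑ a : ZMod q, w ^ a.val = if w = 1 then (q : ℂ) else 0 := by
  rw [← Equiv.sum_comp (fz q) (fun a => w ^ a.val)]
  have : ∀ i : Fin q, w ^ ((fz q) i).val = w ^ (i : ℕ) := by
    intro i; simp [fz, ZMod.val_natCast_of_lt i.isLt]
  rw [Finset.sum_congr rfl fun i _ => this i]
  exact sum_fin_pow q w hw

section S2
variable (q : ℕ) [NeZero q]

lemma zmod_eq_iff_val_eq (x y : ZMod q) : x = y ↔ x.val = y.val :=
  ⟨congrArg _, fun h => (fz q).symm.injective (Fin.ext h)⟩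

lemma fin_cast_inj (i j : Fin q) : (((i : ℕ) : ZMod q) = ((j : ℕ) : ZMod q)) ↔ i = j := by
  constructor
  · intro h
    have := (zmod_eq_iff_val_eq q _ _).mp h
    rw [ZMod.val_natCast_of_lt i.isLt, ZMod.val_natCast_of_lt j.isLt] at this
    exact Fin.ext this
  · rintro rfl; rfl

lemma cond_iff (i j : Fin q) (m : ℕ) :
    ((i : ℕ) = ((j : ℕ) + m) % q) ↔ ((i : ℕ) : ZMod q) = ((j : ℕ) : ZMod q) + (m : ZMod q) := by
  rw [zmod_eq_iff_val_eq, ZMod.val_natCast_of_lt i.isLt, ZMod.val_add,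
    ZMod.val_natCast_of_lt j.isLt, ZMod.val_natCast]
  rw [Nat.add_mod (j : ℕ) m q, Nat.mod_eq_of_lt j.isLt]

lemma Xpow_apply (m : ℕ) (i j : Fin q) :
    (Xmat q ^ m) i j = if ((i : ℕ) : ZMod q) = ((j : ℕ) : ZMod q) + (m : ZMod q) then 1 else 0 := by
  induction m generalizing i j with
  | zero =>
    simp only [pow_zero, Nat.cast_zero, add_zero, Matrix.one_apply, fin_cast_inj]
  | succ m ih =>
    rw [pow_succ', Matrix.mul_apply]
    set c : ZMod q := ((j : ℕ) : ZMod q) + (m : ZMod q) with hc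
    have key : ∀ k : Fin q, Xmat q i k * (Xmat q ^ m) k j
        = if k = (fz q).symm c then
            (if ((i : ℕ) : ZMod q) = ((k : ℕ) : ZMod q) + 1 then 1 else 0) else 0 := by
      intro k
      rw [ih]
      have h1 : Xmat q i k = if ((i : ℕ) : ZMod q) = ((k : ℕ) : ZMod q) + (1 : ZMod q) then 1 else 0 := by
        unfold Xmat
        rw [if_congr (by simpa using cond_iff q i k 1) rfl rfl]
      rw [h1, mul_ite, mul_one, mul_zero]
      refine if_congr ?_ rfl rfl
      have : fz q k = ((k : ℕ) : ZMod q) := rfl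
      rw [Equiv.eq_symm_apply, this]
    rw [Finset.sum_congr rfl fun k _ => key k, Finset.sum_ite_eq' Finset.univ]
    simp only [Finset.mem_univ, if_true]
    refine if_congr ?_ rfl rfl
    have h2 : (((((fz q).symm c) : Fin q) : ℕ) : ZMod q) = c := (fz q).apply_symm_apply c
    rw [h2, hc, Nat.cast_succ]
    constructor <;> intro h <;> [rw [h]; rw [h]] <;> ring

lemma Epauli_apply (p : ZMod q × ZMod q) (i j : Fin q) :
    Epauli q p i j
      = (if ((i : ℕ) : ZMod q) = ((j : ℕ) : ZMod q) + p.1 then 1 else 0)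
          * zeta q ^ ((j : ℕ) * p.2.val) := by
  unfold Epauli Zmat
  rw [Matrix.diagonal_pow, Matrix.mul_diagonal, Xpow_apply]
  rw [ZMod.natCast_rightInverse p.1, Pi.pow_apply, ← pow_mul]
  rfl

lemma Epauli_zero : Epauli q 0 = 1 := by
  unfold Epauli
  simp [ZMod.val_zero]

end S2
section S3
variable (q : ℕ) [NeZero q]

lemma zeta_ne_zero : zeta q ≠ 0 := Complex.exp_ne_zero _

lemma sum_ite_ite (A B : ZMod q) :
    ∑ x : ZMod q, (if x = A then (1 : ℂ) else 0) * (if x = B then 1 else 0)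
      = if A = B then 1 else 0 := by
  have h : ∀ x : ZMod q, (if x = A then (1 : ℂ) else 0) * (if x = B then 1 else 0)
      = if x = A then (if x = B then (1 : ℂ) else 0) else 0 := by
    intro x; rw [ite_mul, one_mul, zero_mul]
  rw [Finset.sum_congr rfl fun x _ => h x, Finset.sum_ite_eq' Finset.univ]
  simp

lemma trace_inner (A M : Matrix (Fin q) (Fin q) ℂ) :
    Matrix.trace (Aᴴ * M) = ∑ k, ∑ j, conj (A j k) * M j k := by
  simp [Matrix.trace, Matrix.diag, Matrix.mul_apply, Matrix.conjTranspose_apply]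

lemma Epauli_conj_apply (p : ZMod q × ZMod q) (i j : Fin q) :
    conj (Epauli q p i j)
      = (if ((i : ℕ) : ZMod q) = ((j : ℕ) : ZMod q) + p.1 then (1:ℂ) else 0)
          * (zeta q)⁻¹ ^ ((j : ℕ) * p.2.val) := by
  rw [Epauli_apply, _root_.map_mul, conj_zeta_pow]
  congr 1
  rw [apply_ite conj, _root_.map_one, _root_.map_zero]

lemma zeta_pow_eq_iff (s t : ℕ) (hs : s < q) (ht : t < q) :
    zeta q ^ s = zeta q ^ t ↔ s = t :=
  ⟨fun h => (zeta_prim q).pow_inj hs ht h, fun h => by rw [h]⟩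

lemma trace_ortho (a b : ZMod q × ZMod q) :
    Matrix.trace ((Epauli q a)ᴴ * Epauli q b) = if a = b then (q : ℂ) else 0 := by
  rw [trace_inner]
  set w : ℂ := (zeta q)⁻¹ ^ a.2.val * (zeta q) ^ b.2.val with hw
  have hwq : w ^ q = 1 := by
    rw [hw, mul_pow, ← pow_mul, ← pow_mul, Nat.mul_comm a.2.val q, Nat.mul_comm b.2.val q,
      pow_mul, pow_mul, zeta_inv_pow_q, zeta_pow_q, one_pow, one_pow, one_mul]
  have hterm : ∀ k j : Fin q, conj (Epauli q a j k) * Epauli q b j k =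
      ((if ((j : ℕ) : ZMod q) = (((k : ℕ) : ZMod q) + a.1) then (1:ℂ) else 0)
        * (if ((j : ℕ) : ZMod q) = (((k : ℕ) : ZMod q) + b.1) then 1 else 0)) * w ^ (k : ℕ) := by
    intro k j
    rw [Epauli_conj_apply, Epauli_apply]
    have hwk : w ^ (k:ℕ) = (zeta q)⁻¹ ^ ((k:ℕ) * a.2.val) * zeta q ^ ((k:ℕ) * b.2.val) := by
      rw [hw, mul_pow, ← pow_mul, ← pow_mul, Nat.mul_comm a.2.val (k:ℕ),
        Nat.mul_comm b.2.val (k:ℕ)]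
    rw [hwk]; ring
  have hj : ∀ k : Fin q, (∑ j : Fin q, conj (Epauli q a j k) * Epauli q b j k)
      = (if a.1 = b.1 then (1:ℂ) else 0) * w ^ (k : ℕ) := by
    intro k
    rw [Finset.sum_congr rfl fun j _ => hterm k j, ← Finset.sum_mul]
    congr 1
    calc ∑ j : Fin q, ((if ((j : ℕ) : ZMod q) = (((k : ℕ) : ZMod q) + a.1) then (1:ℂ) else 0)
            * (if ((j : ℕ) : ZMod q) = (((k : ℕ) : ZMod q) + b.1) then 1 else 0))
        = ∑ x : ZMod q, ((if x = (((k : ℕ) : ZMod q) + a.1) then (1:ℂ) else 0)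
            * (if x = (((k : ℕ) : ZMod q) + b.1) then 1 else 0)) :=
          by
            exact Equiv.sum_comp (fz q) (fun x : ZMod q =>
              (if x = (((k : ℕ) : ZMod q) + a.1) then (1:ℂ) else 0)
                * (if x = (((k : ℕ) : ZMod q) + b.1) then 1 else 0))
      _ = if (((k : ℕ) : ZMod q) + a.1) = (((k : ℕ) : ZMod q) + b.1) then (1:ℂ) else 0 :=
          sum_ite_ite q _ _
      _ = if a.1 = b.1 then (1:ℂ) else 0 := by rw [if_congr (add_right_inj _) rfl rfl]
  rw [Finset.sum_congr rfl fun k _ => hj k, ← Finset.mul_sum, sum_fin_pow q w hwq]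
  have hw1 : (w = 1) ↔ a.2 = b.2 := by
    rw [hw, inv_pow, inv_mul_eq_one₀ (pow_ne_zero _ (zeta_ne_zero q)),
      zeta_pow_eq_iff q _ _ (ZMod.val_lt a.2) (ZMod.val_lt b.2)]
    exact (zmod_eq_iff_val_eq q a.2 b.2).symm
  by_cases h1 : a.1 = b.1 <;> by_cases h2 : a.2 = b.2 <;>
    simp [h1, h2, hw1, Prod.ext_iff]

lemma complete (j k j' k' : Fin q) :
    ∑ p : ZMod q × ZMod q, Epauli q p j' k' * conj (Epauli q p j k)
      = if j' = j ∧ k' = k then (q : ℂ) else 0 := by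
  rw [Fintype.sum_prod_type]
  set w : ℂ := zeta q ^ (k' : ℕ) * (zeta q)⁻¹ ^ (k : ℕ) with hw
  have hwq : w ^ q = 1 := by
    rw [hw, mul_pow, ← pow_mul, ← pow_mul, Nat.mul_comm (k':ℕ) q, Nat.mul_comm (k:ℕ) q,
      pow_mul, pow_mul, zeta_inv_pow_q, zeta_pow_q, one_pow, one_pow, one_mul]
  have hterm : ∀ (x y : ZMod q), Epauli q (x, y) j' k' * conj (Epauli q (x, y) j k)
      = ((if x = ((j' : ℕ) : ZMod q) - ((k' : ℕ) : ZMod q) then (1:ℂ) else 0)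
          * (if x = ((j : ℕ) : ZMod q) - ((k : ℕ) : ZMod q) then 1 else 0)) * w ^ y.val := by
    intro x y
    rw [Epauli_apply, Epauli_conj_apply]
    have hwy : w ^ y.val = zeta q ^ ((k' : ℕ) * y.val) * (zeta q)⁻¹ ^ ((k : ℕ) * y.val) := by
      rw [hw, mul_pow, ← pow_mul, ← pow_mul]
    rw [hwy]
    have c1 : (((j' : ℕ) : ZMod q) = ((k' : ℕ) : ZMod q) + x) ↔
        (x = ((j' : ℕ) : ZMod q) - ((k' : ℕ) : ZMod q)) := by
      constructor <;> intro h <;> [rw [h]; rw [h]] <;> ring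
    have c2 : (((j : ℕ) : ZMod q) = ((k : ℕ) : ZMod q) + x) ↔
        (x = ((j : ℕ) : ZMod q) - ((k : ℕ) : ZMod q)) := by
      constructor <;> intro h <;> [rw [h]; rw [h]] <;> ring
    rw [if_congr c1 rfl rfl, if_congr c2 rfl rfl]
    ring
  rw [Finset.sum_congr rfl fun x _ => Finset.sum_congr rfl fun y _ => hterm x y]
  rw [← Finset.sum_mul_sum]
  rw [sum_ite_ite, sum_zmod_pow q w hwq]
  have hw1 : (w = 1) ↔ k' = k := by
    rw [hw, inv_pow, mul_inv_eq_one₀ (pow_ne_zero _ (zeta_ne_zero q)),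
      zeta_pow_eq_iff q _ _ k'.isLt k.isLt]
    exact ⟨fun h => Fin.ext h, fun h => by rw [h]⟩
  have hAB : (((j' : ℕ) : ZMod q) - ((k' : ℕ) : ZMod q) = ((j : ℕ) : ZMod q) - ((k : ℕ) : ZMod q))
      ↔ (((j' : ℕ) : ZMod q) + ((k : ℕ) : ZMod q) = ((j : ℕ) : ZMod q) + ((k' : ℕ) : ZMod q)) := by
    rw [sub_eq_sub_iff_add_eq_add]
  by_cases hk : k' = k
  · subst hk
    by_cases hj : j' = j
    · subst hj; simp [hw1]
    · have : ¬ (((j' : ℕ) : ZMod q) = ((j : ℕ) : ZMod q)) := fun h => hj ((fin_cast_inj q _ _).mp h)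
      simp [hw1, hAB, this, sub_left_inj, hj]
  · simp [hw1, hk]

end S3




section S4
variable (q : ℕ) [NeZero q] {ι : Type} [Fintype ι] [DecidableEq ι]

lemma kron_mul (A B : ι → Matrix (Fin q) (Fin q) ℂ) :
    kron q A * kron q B = kron q (fun i => A i * B i) := by
  ext v w
  show ∑ u : ι → Fin q, (∏ i, A i (v i) (u i)) * ∏ i, B i (u i) (w i)
      = ∏ i, (A i * B i) (v i) (w i)
  have h1 : ∀ u : ι → Fin q, (∏ i, A i (v i) (u i)) * ∏ i, B i (u i) (w i)
      = ∏ i, (A i (v i) (u i) * B i (u i) (w i)) := fun u =>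
    (Finset.prod_mul_distrib).symm
  rw [Finset.sum_congr rfl fun u _ => h1 u]
  have h2 : ∀ i : ι, (A i * B i) (v i) (w i) = ∑ x ∈ Finset.univ, A i (v i) x * B i x (w i) :=
    fun i => Matrix.mul_apply
  rw [Finset.prod_congr rfl fun i _ => h2 i, Finset.prod_univ_sum, Fintype.piFinset_univ]

lemma kron_conjTranspose (A : ι → Matrix (Fin q) (Fin q) ℂ) :
    (kron q A)ᴴ = kron q (fun i => (A i)ᴴ) := by
  ext v w
  show star (∏ i, A i (w i) (v i)) = ∏ i, star (A i (w i) (v i))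
  exact star_prod _ _

lemma trace_kron (A : ι → Matrix (Fin q) (Fin q) ℂ) :
    Matrix.trace (kron q A) = ∏ i, Matrix.trace (A i) := by
  show ∑ v : ι → Fin q, ∏ i, A i (v i) (v i) = ∏ i, Matrix.trace (A i)
  have h2 : ∀ i : ι, Matrix.trace (A i) = ∑ x ∈ Finset.univ, A i x x := fun i => rfl
  rw [Finset.prod_congr rfl fun i _ => h2 i, Finset.prod_univ_sum, Fintype.piFinset_univ]

-- single-site coefficient
def c1 (q : ℕ) (U : Matrix (Fin q) (Fin q) ℂ) (a b : ZMod q × ZMod q) : ℂ :=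
  ((q : ℂ))⁻¹ * Matrix.trace ((Epauli q a)ᴴ * Uᴴ * Epauli q b * U)

lemma EV_eq_kron (p : ι → ZMod q × ZMod q) : EV q p = kron q (fun i => Epauli q (p i)) := rfl

lemma cCoef_kron (V : ι → Matrix (Fin q) (Fin q) ℂ) (g e : ι → ZMod q × ZMod q) :
    cCoef q (kron q V) g e = ∏ i, c1 q (V i) (g i) (e i) := by
  unfold cCoef c1
  rw [EV_eq_kron, EV_eq_kron, kron_conjTranspose, kron_conjTranspose,
    kron_mul, kron_mul, kron_mul, trace_kron]
  rw [Finset.prod_mul_distrib]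
  congr 1
  rw [← inv_pow, ← Finset.card_univ, ← Finset.prod_const]
end S4
def inprod (q : ℕ) (A B : Matrix (Fin q) (Fin q) ℂ) : ℂ :=
  ∑ r : Fin q × Fin q, conj (A r.2 r.1) * B r.2 r.1

section S5
variable (q : ℕ) [NeZero q]

lemma c1_eq (U : Matrix (Fin q) (Fin q) ℂ) (a e : ZMod q × ZMod q) :
    c1 q U a e = ((q : ℂ))⁻¹ * Matrix.trace ((U * Epauli q a * Uᴴ)ᴴ * Epauli q e) := by
  unfold c1
  congr 1
  rw [Matrix.conjTranspose_mul, Matrix.conjTranspose_mul, Matrix.conjTranspose_conjTranspose]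
  rw [Matrix.trace_mul_comm]
  simp only [Matrix.mul_assoc]

lemma trace_inner' (A M : Matrix (Fin q) (Fin q) ℂ) :
    Matrix.trace (Aᴴ * M) = inprod q A M := by
  rw [trace_inner]
  exact (Fintype.sum_prod_type (f := fun r : Fin q × Fin q => conj (A r.2 r.1) * M r.2 r.1)).symm

lemma inner_expand (A B : Matrix (Fin q) (Fin q) ℂ) :
    ∑ e : ZMod q × ZMod q,
        conj (((q:ℂ))⁻¹ * inprod q A (Epauli q e)) * (((q:ℂ))⁻¹ * inprod q B (Epauli q e))
      = ((q:ℂ))⁻¹ * inprod q B A := by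
  have hq0 : (q : ℂ) ≠ 0 := Nat.cast_ne_zero.mpr (NeZero.ne q)
  have hconj : ∀ e : ZMod q × ZMod q, conj (inprod q A (Epauli q e))
      = ∑ r : Fin q × Fin q, A r.2 r.1 * conj (Epauli q e r.2 r.1) := by
    intro e
    unfold inprod
    rw [map_sum]
    exact Finset.sum_congr rfl fun r _ => by rw [_root_.map_mul, Complex.conj_conj]
  have hstep1 : ∀ e : ZMod q × ZMod q,
      conj (((q:ℂ))⁻¹ * inprod q A (Epauli q e)) * (((q:ℂ))⁻¹ * inprod q B (Epauli q e))
      = ((q:ℂ))⁻¹ * ((q:ℂ))⁻¹ * ∑ r : Fin q × Fin q, ∑ s : Fin q × Fin q,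
          (A r.2 r.1 * conj (B s.2 s.1)) * (Epauli q e s.2 s.1 * conj (Epauli q e r.2 r.1)) := by
    intro e
    rw [_root_.map_mul, map_inv₀, Complex.conj_natCast, hconj e, mul_mul_mul_comm]
    congr 1
    show (∑ r : Fin q × Fin q, A r.2 r.1 * conj (Epauli q e r.2 r.1)) * inprod q B (Epauli q e) = _
    unfold inprod
    rw [Finset.sum_mul_sum]
    exact Finset.sum_congr rfl fun r _ => Finset.sum_congr rfl fun s _ => by ring
  rw [Finset.sum_congr rfl fun e _ => hstep1 e, ← Finset.mul_sum]
  rw [Finset.sum_comm]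
  rw [Finset.sum_congr rfl fun r (_ : r ∈ Finset.univ) => Finset.sum_comm]
  have hinner : ∀ r : Fin q × Fin q,
      (∑ s : Fin q × Fin q, ∑ e : ZMod q × ZMod q,
        (A r.2 r.1 * conj (B s.2 s.1)) * (Epauli q e s.2 s.1 * conj (Epauli q e r.2 r.1)))
      = (A r.2 r.1 * conj (B r.2 r.1)) * (q : ℂ) := by
    intro r
    have h1 : ∀ s : Fin q × Fin q,
        (∑ e : ZMod q × ZMod q,
          (A r.2 r.1 * conj (B s.2 s.1)) * (Epauli q e s.2 s.1 * conj (Epauli q e r.2 r.1)))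
        = if s = r then (A r.2 r.1 * conj (B s.2 s.1)) * (q : ℂ) else 0 := by
      intro s
      rw [← Finset.mul_sum, complete q r.2 r.1 s.2 s.1]
      have hc : (s.2 = r.2 ∧ s.1 = r.1) ↔ s = r := by
        rw [Prod.ext_iff]; exact and_comm
      rw [if_congr hc rfl rfl, mul_ite, mul_zero]
    rw [Finset.sum_congr rfl fun s _ => h1 s, Finset.sum_ite_eq' Finset.univ]
    simp
  rw [Finset.sum_congr rfl fun r _ => hinner r]
  rw [← Finset.sum_mul]
  unfold inprod
  rw [Finset.sum_congr rfl fun r (_ : r ∈ (Finset.univ : Finset (Fin q × Fin q))) =>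
    mul_comm (conj (B r.2 r.1)) (A r.2 r.1)]
  field_simp

lemma c1_zero (U : Matrix (Fin q) (Fin q) ℂ) (hU : U ∈ Matrix.unitaryGroup (Fin q) ℂ)
    (a : ZMod q × ZMod q) : c1 q U a 0 = if a = 0 then 1 else 0 := by
  have h1 : Uᴴ * U = 1 := by
    rw [← Matrix.star_eq_conjTranspose]; exact (Unitary.mem_iff.mp hU).1
  unfold c1
  rw [Epauli_zero, Matrix.mul_one, Matrix.mul_assoc, h1, Matrix.mul_one]
  have h2 : Matrix.trace (Epauli q a)ᴴ = if a = 0 then (q:ℂ) else 0 := by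
    have := trace_ortho q a 0
    rwa [Epauli_zero, Matrix.mul_one] at this
  rw [h2]
  have hq0 : (q : ℂ) ≠ 0 := Nat.cast_ne_zero.mpr (NeZero.ne q)
  by_cases h : a = 0 <;> simp [h, hq0]

lemma c1_sum (U : Matrix (Fin q) (Fin q) ℂ) (hU : U ∈ Matrix.unitaryGroup (Fin q) ℂ)
    (a a' : ZMod q × ZMod q) :
    ∑ e : ZMod q × ZMod q, conj (c1 q U a e) * c1 q U a' e = if a = a' then 1 else 0 := by
  have h1 : Uᴴ * U = 1 := by
    rw [← Matrix.star_eq_conjTranspose]; exact (Unitary.mem_iff.mp hU).1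
  have hc : ∀ b e : ZMod q × ZMod q,
      c1 q U b e = ((q:ℂ))⁻¹ * inprod q (U * Epauli q b * Uᴴ) (Epauli q e) := by
    intro b e; rw [c1_eq, trace_inner']
  rw [Finset.sum_congr rfl fun e _ => by rw [hc a e, hc a' e]]
  rw [inner_expand q (U * Epauli q a * Uᴴ) (U * Epauli q a' * Uᴴ), ← trace_inner']
  have h2 : (U * Epauli q a' * Uᴴ)ᴴ * (U * Epauli q a * Uᴴ)
      = U * ((Epauli q a')ᴴ * Epauli q a) * Uᴴ := by
    rw [Matrix.conjTranspose_mul, Matrix.conjTranspose_mul, Matrix.conjTranspose_conjTranspose]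
    simp only [Matrix.mul_assoc]
    congr 1
    congr 1
    rw [← Matrix.mul_assoc Uᴴ U, h1, Matrix.one_mul]
  rw [h2, Matrix.trace_mul_cycle, ← Matrix.mul_assoc, h1, Matrix.one_mul, trace_ortho]
  have hq0 : (q : ℂ) ≠ 0 := Nat.cast_ne_zero.mpr (NeZero.ne q)
  by_cases h : a = a'
  · simp [h, hq0]
  · simp [h, Ne.symm h]

end S5
def wt1 {q : ℕ} (p : ZMod q × ZMod q) : ℕ := if p = 0 then 0 else 1

section S6
variable (q : ℕ) [NeZero q]

lemma wtL_eq {ι : Type} [Fintype ι] (e : ι → ZMod q × ZMod q) :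
    wtL q e = ∑ i, wt1 (e i) := by
  unfold wtL wt1
  rw [Finset.card_filter]
  exact Finset.sum_congr rfl fun i _ => by by_cases h : e i = 0 <;> simp [h]

lemma G1 (U : Matrix (Fin q) (Fin q) ℂ) (hU : U ∈ Matrix.unitaryGroup (Fin q) ℂ)
    (a a' : ZMod q × ZMod q) :
    ∑ p : ZMod q × ZMod q,
        (Polynomial.X : Polynomial ℂ) ^ wt1 p
          * (Polynomial.C (conj (c1 q U a p)) * Polynomial.C (c1 q U a' p))
      = if a = a' then (Polynomial.X : Polynomial ℂ) ^ wt1 a else 0 := by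
  have hs : ∀ p : ZMod q × ZMod q,
      (Polynomial.X : Polynomial ℂ) ^ wt1 p
          * (Polynomial.C (conj (c1 q U a p)) * Polynomial.C (c1 q U a' p))
      = Polynomial.X * Polynomial.C (conj (c1 q U a p) * c1 q U a' p)
        + (if p = 0 then (1 - Polynomial.X) * Polynomial.C (conj (c1 q U a p) * c1 q U a' p)
           else 0) := by
    intro p
    by_cases hp : p = 0 <;> simp [wt1, hp, _root_.map_mul] <;> ring
  rw [Finset.sum_congr rfl fun p _ => hs p, Finset.sum_add_distrib]
  rw [Finset.sum_ite_eq' Finset.univ (0 : ZMod q × ZMod q)]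
  have h1 : ∑ p : ZMod q × ZMod q,
      Polynomial.X * Polynomial.C (conj (c1 q U a p) * c1 q U a' p)
      = Polynomial.X * Polynomial.C (if a = a' then 1 else 0) := by
    rw [← Finset.mul_sum, ← map_sum, c1_sum q U hU a a']
  rw [h1, if_pos (Finset.mem_univ (0 : ZMod q × ZMod q)), c1_zero q U hU a, c1_zero q U hU a']
  by_cases h : a = a'
  · subst h
    by_cases h0 : a = 0 <;> simp [h0, wt1] <;> ring
  · have hz : conj (if a = 0 then (1:ℂ) else 0) * (if a' = 0 then (1:ℂ) else 0) = 0 := by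
      by_cases h0 : a = 0 <;> by_cases h0' : a' = 0
      · exact absurd (h0.trans h0'.symm) h
      all_goals simp [h0, h0']
    simp only [if_neg h]
    rw [hz]
    simp

lemma Hmulti {ι : Type} [Fintype ι] [DecidableEq ι] (V : ι → Matrix (Fin q) (Fin q) ℂ)
    (hV : ∀ i, V i ∈ Matrix.unitaryGroup (Fin q) ℂ) (a a' : ι → ZMod q × ZMod q) :
    ∑ e : ι → ZMod q × ZMod q,
        (Polynomial.X : Polynomial ℂ) ^ wtL q e
          * (Polynomial.C (conj (∏ i, c1 q (V i) (a i) (e i)))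
              * Polynomial.C (∏ i, c1 q (V i) (a' i) (e i)))
      = if a = a' then (Polynomial.X : Polynomial ℂ) ^ wtL q a else 0 := by
  have hterm : ∀ e : ι → ZMod q × ZMod q,
      (Polynomial.X : Polynomial ℂ) ^ wtL q e
          * (Polynomial.C (conj (∏ i, c1 q (V i) (a i) (e i)))
              * Polynomial.C (∏ i, c1 q (V i) (a' i) (e i)))
      = ∏ i, ((Polynomial.X : Polynomial ℂ) ^ wt1 (e i)
          * (Polynomial.C (conj (c1 q (V i) (a i) (e i)))
              * Polynomial.C (c1 q (V i) (a' i) (e i)))) := by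
    intro e
    rw [wtL_eq, ← Finset.prod_pow_eq_pow_sum, map_prod, map_prod, map_prod,
      ← Finset.prod_mul_distrib, ← Finset.prod_mul_distrib]
  rw [Finset.sum_congr rfl fun e _ => hterm e]
  rw [← Fintype.piFinset_univ]
  have hps := Finset.prod_univ_sum (fun _ : ι => (Finset.univ : Finset (ZMod q × ZMod q)))
    (fun i x => (Polynomial.X : Polynomial ℂ) ^ wt1 x
      * (Polynomial.C (conj (c1 q (V i) (a i) x)) * Polynomial.C (c1 q (V i) (a' i) x)))
  rw [← hps]
  rw [Finset.prod_congr rfl fun i _ => G1 q (V i) (hV i) (a i) (a' i)]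
  by_cases h : a = a'
  · subst h
    rw [if_pos rfl]
    have : ∀ i : ι, (if a i = a i then (Polynomial.X : Polynomial ℂ) ^ wt1 (a i) else 0)
        = (Polynomial.X : Polynomial ℂ) ^ wt1 (a i) := fun i => if_pos rfl
    rw [Finset.prod_congr rfl fun i _ => this i, Finset.prod_pow_eq_pow_sum, ← wtL_eq]
  · rw [if_neg h]
    obtain ⟨i, hi⟩ := Function.ne_iff.mp h
    exact Finset.prod_eq_zero (Finset.mem_univ i) (if_neg hi)

end S6


section Assemble
variable {R : Type*} [CommRing R] {A B E : Type*} [Fintype A] [Fintype B] [Fintype E]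
  [DecidableEq B]

lemma assemble (κ : A → A → R) (ρ ρ' : B → E → R) (χ : E → R) (σ : B → R)
    (hω : ∀ b b' : B, (∑ c, χ c * (ρ b c * ρ' b' c)) = if b = b' then σ b else 0)
    (t : A → B → A → B → R) :
    (∑ c, ∑ a, ∑ b, ∑ a', ∑ b', χ c * (κ a a' * (ρ b c * ρ' b' c) * t a b a' b'))
      = ∑ a, ∑ a', ∑ b, κ a a' * (σ b * t a b a' b) := by
  have step1 : (∑ c : E, ∑ a : A, ∑ b : B, ∑ a' : A, ∑ b' : B,
        χ c * (κ a a' * (ρ b c * ρ' b' c) * t a b a' b'))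
      = ∑ a : A, ∑ b : B, ∑ a' : A, ∑ b' : B, ∑ c : E,
        χ c * (κ a a' * (ρ b c * ρ' b' c) * t a b a' b') := by
    rw [Finset.sum_comm]
    refine Finset.sum_congr rfl fun a _ => ?_
    rw [Finset.sum_comm]
    refine Finset.sum_congr rfl fun b _ => ?_
    rw [Finset.sum_comm]
    refine Finset.sum_congr rfl fun a' _ => ?_
    rw [Finset.sum_comm]
  have step2 : ∀ (a a' : A) (b b' : B),
      (∑ c : E, χ c * (κ a a' * (ρ b c * ρ' b' c) * t a b a' b'))
      = κ a a' * ((if b = b' then σ b else 0) * t a b a' b') := by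
    intro a a' b b'
    rw [← hω b b', Finset.sum_mul, Finset.mul_sum]
    exact Finset.sum_congr rfl fun c _ => by ring
  rw [step1]
  refine Finset.sum_congr rfl fun a _ => ?_
  rw [Finset.sum_comm]
  refine Finset.sum_congr rfl fun a' _ => Finset.sum_congr rfl fun b _ => ?_
  rw [Finset.sum_congr rfl fun b' _ => step2 a a' b b']
  have h3 : ∀ b' : B, κ a a' * ((if b = b' then σ b else 0) * t a b a' b')
      = if b' = b then κ a a' * (σ b * t a b a' b') else 0 := by
    intro b'
    by_cases hb : b' = b
    · subst hb; rw [if_pos rfl, if_pos rfl]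
    · rw [if_neg (fun hh => hb hh.symm), if_neg hb, zero_mul, mul_zero]
  rw [Finset.sum_congr rfl fun b' _ => h3 b', Finset.sum_ite_eq' Finset.univ]
  simp

end Assemble

section Comb
variable {n : ℕ} {J K : Finset (Fin n)} {α : Type*}

def comb (f : {j // j ∈ K} → α) (e : {j // j ∈ J \ K} → α) : {j // j ∈ J} → α :=
  fun j => if h : j.val ∈ K then f ⟨j.val, h⟩ else e ⟨j.val, Finset.mem_sdiff.mpr ⟨j.2, h⟩⟩

def combEquiv (hKJ : K ⊆ J) :
    (({j // j ∈ K} → α) × ({j // j ∈ J \ K} → α)) ≃ ({j // j ∈ J} → α) where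
  toFun p := comb p.1 p.2
  invFun g := (fun j => g ⟨j.val, hKJ j.2⟩, fun j => g ⟨j.val, (Finset.mem_sdiff.mp j.2).1⟩)
  left_inv p := by
    obtain ⟨u, v⟩ := p
    refine Prod.ext ?_ ?_
    · funext j
      show comb u v ⟨j.val, _⟩ = u j
      simp only [comb, dif_pos j.2]
    · funext j
      have hj := Finset.mem_sdiff.mp j.2
      show comb u v ⟨j.val, _⟩ = v j
      simp only [comb, dif_neg hj.2]
  right_inv g := by
    funext j
    by_cases h : j.val ∈ K
    · simp only [comb, dif_pos h]
    · simp only [comb, dif_neg h]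

lemma sum_comb [Fintype α] {M : Type*} [AddCommMonoid M] (hKJ : K ⊆ J)
    (F : ({j // j ∈ J} → α) → M) :
    ∑ g : {j // j ∈ J} → α, F g
      = ∑ u : {j // j ∈ K} → α, ∑ v : {j // j ∈ J \ K} → α, F (comb u v) := by
  rw [← Equiv.sum_comp (combEquiv hKJ) F, Fintype.sum_prod_type]
  rfl

lemma prod_comb {β : Type*} [CommMonoid β] (hKJ : K ⊆ J) (G : Fin n → α → α → β)
    (u u' : {j // j ∈ K} → α) (v v' : {j // j ∈ J \ K} → α) :
    ∏ j : {j // j ∈ J}, G j.val (comb u v j) (comb u' v' j)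
      = (∏ j : {j // j ∈ K}, G j.val (u j) (u' j))
          * ∏ j : {j // j ∈ J \ K}, G j.val (v j) (v' j) := by
  classical
  set Fc : Fin n → β := fun j =>
    if h : j ∈ K then G j (u ⟨j, h⟩) (u' ⟨j, h⟩)
    else if h' : j ∈ J \ K then G j (v ⟨j, h'⟩) (v' ⟨j, h'⟩) else 1 with hFc
  have hJb : ∀ j : {j // j ∈ J}, G j.val (comb u v j) (comb u' v' j) = Fc j.val := by
    intro j
    by_cases h : j.val ∈ K
    · simp only [hFc, comb, dif_pos h]
    · have h' : j.val ∈ J \ K := Finset.mem_sdiff.mpr ⟨j.2, h⟩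
      simp only [hFc, comb, dif_neg h, dif_pos h']
  have hKb : ∀ j : {j // j ∈ K}, Fc j.val = G j.val (u j) (u' j) := by
    intro j; simp only [hFc, dif_pos j.2]
  have hRb : ∀ j : {j // j ∈ J \ K}, Fc j.val = G j.val (v j) (v' j) := by
    intro j
    have h : j.val ∉ K := (Finset.mem_sdiff.mp j.2).2
    simp only [hFc, dif_neg h, dif_pos j.2]
  calc ∏ j : {j // j ∈ J}, G j.val (comb u v j) (comb u' v' j)
      = ∏ j : {j // j ∈ J}, Fc j.val := Finset.prod_congr rfl fun j _ => hJb j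
    _ = ∏ j ∈ J, Fc j := by rw [← Finset.prod_subtype J (fun _ => Iff.rfl) Fc]
    _ = (∏ j ∈ K, Fc j) * ∏ j ∈ J \ K, Fc j := by
          rw [← Finset.prod_sdiff hKJ]; exact mul_comm _ _
    _ = _ := by
          rw [Finset.prod_subtype K (fun _ => Iff.rfl) Fc,
            Finset.prod_subtype (J \ K) (fun _ => Iff.rfl) Fc]
          exact congrArg₂ (· * ·) (Finset.prod_congr rfl fun j _ => hKb j)
            (Finset.prod_congr rfl fun j _ => hRb j)

end Comb

/-- Compatibility of the weighted trace with the local unitary action: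
`Λ(U_K) ∘ tr^J_K = tr^J_K ∘ Λ(U_J)`. -/
theorem stmt13 (q n : ℕ) [NeZero q] (hq : 2 ≤ q) (hn : 1 ≤ n)
    (Us : Fin n → Matrix (Fin q) (Fin q) ℂ)
    (hU : ∀ j, Us j ∈ Matrix.unitaryGroup (Fin q) ℂ)
    (J K : Finset (Fin n)) (hKJ : K ⊆ J) (hne : K ≠ J)
    (T : ({j // j ∈ J} → ZMod q × ZMod q) → ({j // j ∈ J} → ZMod q × ZMod q) →
      Polynomial ℂ) :
    Lam q (kron q fun j : {j // j ∈ K} => Us j.val) (trJK q K hKJ T) =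
      trJK q K hKJ (Lam q (kron q fun j : {j // j ∈ J} => Us j.val) T) := by
  classical
  funext f f'
  have trJK_apply : ∀ (T' : ({j // j ∈ J} → ZMod q × ZMod q) →
        ({j // j ∈ J} → ZMod q × ZMod q) → Polynomial ℂ)
      (g g' : {j // j ∈ K} → ZMod q × ZMod q),
      trJK q K hKJ T' g g' = ∑ e : {j // j ∈ J \ K} → ZMod q × ZMod q,
        Polynomial.X ^ wtL q e * T' (comb g e) (comb g' e) := fun _ _ _ => rfl
  have hω : ∀ b b' : {j // j ∈ J \ K} → ZMod q × ZMod q,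
      (∑ c : {j // j ∈ J \ K} → ZMod q × ZMod q,
        (Polynomial.X : Polynomial ℂ) ^ wtL q c *
          (Polynomial.C (conj (∏ j : {j // j ∈ J \ K}, c1 q (Us j.val) (b j) (c j)))
            * Polynomial.C (∏ j : {j // j ∈ J \ K}, c1 q (Us j.val) (b' j) (c j))))
      = if b = b' then (Polynomial.X : Polynomial ℂ) ^ wtL q b else 0 :=
    fun b b' => Hmulti q (fun j : {j // j ∈ J \ K} => Us j.val) (fun j => hU j.val) b b'
  have hmain := assemble (R := Polynomial ℂ)
    (κ := fun a a' : {j // j ∈ K} → ZMod q × ZMod q =>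
      Polynomial.C (conj (∏ j : {j // j ∈ K}, c1 q (Us j.val) (a j) (f j))
        * ∏ j : {j // j ∈ K}, c1 q (Us j.val) (a' j) (f' j)))
    (ρ := fun b c => Polynomial.C (conj (∏ j : {j // j ∈ J \ K}, c1 q (Us j.val) (b j) (c j))))
    (ρ' := fun b' c => Polynomial.C (∏ j : {j // j ∈ J \ K}, c1 q (Us j.val) (b' j) (c j)))
    (χ := fun c => (Polynomial.X : Polynomial ℂ) ^ wtL q c)
    (σ := fun b => (Polynomial.X : Polynomial ℂ) ^ wtL q b)
    hω
    (t := fun a b a' b' => T (comb a b) (comb a' b'))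
  have hL : Lam q (kron q fun j : {j // j ∈ K} => Us j.val) (trJK q K hKJ T) f f'
      = ∑ a : {j // j ∈ K} → ZMod q × ZMod q, ∑ a' : {j // j ∈ K} → ZMod q × ZMod q,
          ∑ b : {j // j ∈ J \ K} → ZMod q × ZMod q,
          Polynomial.C (conj (∏ j : {j // j ∈ K}, c1 q (Us j.val) (a j) (f j))
              * ∏ j : {j // j ∈ K}, c1 q (Us j.val) (a' j) (f' j))
            * ((Polynomial.X : Polynomial ℂ) ^ wtL q b * T (comb a b) (comb a' b)) := by
    show (∑ g : {j // j ∈ K} → ZMod q × ZMod q, ∑ g' : {j // j ∈ K} → ZMod q × ZMod q,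
        Polynomial.C (conj (cCoef q (kron q fun j : {j // j ∈ K} => Us j.val) g f)
            * cCoef q (kron q fun j : {j // j ∈ K} => Us j.val) g' f')
          * trJK q K hKJ T g g') = _
    refine Finset.sum_congr rfl fun a _ => Finset.sum_congr rfl fun a' _ => ?_
    rw [cCoef_kron, cCoef_kron, trJK_apply, Finset.mul_sum]
  have hR : trJK q K hKJ (Lam q (kron q fun j : {j // j ∈ J} => Us j.val) T) f f'
      = ∑ c : {j // j ∈ J \ K} → ZMod q × ZMod q,
          ∑ a : {j // j ∈ K} → ZMod q × ZMod q,
          ∑ b : {j // j ∈ J \ K} → ZMod q × ZMod q,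
          ∑ a' : {j // j ∈ K} → ZMod q × ZMod q,
          ∑ b' : {j // j ∈ J \ K} → ZMod q × ZMod q,
          (Polynomial.X : Polynomial ℂ) ^ wtL q c *
            (Polynomial.C (conj (∏ j : {j // j ∈ K}, c1 q (Us j.val) (a j) (f j))
                * ∏ j : {j // j ∈ K}, c1 q (Us j.val) (a' j) (f' j))
              * (Polynomial.C (conj (∏ j : {j // j ∈ J \ K}, c1 q (Us j.val) (b j) (c j)))
                  * Polynomial.C (∏ j : {j // j ∈ J \ K}, c1 q (Us j.val) (b' j) (c j)))
              * T (comb a b) (comb a' b')) := by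
    rw [trJK_apply]
    refine Finset.sum_congr rfl fun c _ => ?_
    have e1 : Lam q (kron q fun j : {j // j ∈ J} => Us j.val) T (comb f c) (comb f' c)
        = ∑ a : {j // j ∈ K} → ZMod q × ZMod q,
          ∑ b : {j // j ∈ J \ K} → ZMod q × ZMod q,
          ∑ a' : {j // j ∈ K} → ZMod q × ZMod q,
          ∑ b' : {j // j ∈ J \ K} → ZMod q × ZMod q,
          Polynomial.C (conj (cCoef q (kron q fun j : {j // j ∈ J} => Us j.val) (comb a b) (comb f c))
              * cCoef q (kron q fun j : {j // j ∈ J} => Us j.val) (comb a' b') (comb f' c))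
            * T (comb a b) (comb a' b') := by
      show (∑ g : {j // j ∈ J} → ZMod q × ZMod q, ∑ g' : {j // j ∈ J} → ZMod q × ZMod q,
          Polynomial.C (conj (cCoef q (kron q fun j : {j // j ∈ J} => Us j.val) g (comb f c))
              * cCoef q (kron q fun j : {j // j ∈ J} => Us j.val) g' (comb f' c))
            * T g g') = _
      rw [sum_comb hKJ (F := fun g : {j // j ∈ J} → ZMod q × ZMod q =>
        ∑ g' : {j // j ∈ J} → ZMod q × ZMod q,
          Polynomial.C (conj (cCoef q (kron q fun j : {j // j ∈ J} => Us j.val) g (comb f c))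
              * cCoef q (kron q fun j : {j // j ∈ J} => Us j.val) g' (comb f' c))
            * T g g')]
      refine Finset.sum_congr rfl fun a _ => Finset.sum_congr rfl fun b _ => ?_
      rw [sum_comb hKJ (F := fun g' : {j // j ∈ J} → ZMod q × ZMod q =>
          Polynomial.C (conj (cCoef q (kron q fun j : {j // j ∈ J} => Us j.val) (comb a b) (comb f c))
              * cCoef q (kron q fun j : {j // j ∈ J} => Us j.val) g' (comb f' c))
            * T (comb a b) g')]
    rw [e1]
    rw [Finset.mul_sum]
    refine Finset.sum_congr rfl fun a _ => ?_
    rw [Finset.mul_sum]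
    refine Finset.sum_congr rfl fun b _ => ?_
    rw [Finset.mul_sum]
    refine Finset.sum_congr rfl fun a' _ => ?_
    rw [Finset.mul_sum]
    refine Finset.sum_congr rfl fun b' _ => ?_
    rw [cCoef_kron, cCoef_kron,
      prod_comb hKJ (fun j x y => c1 q (Us j) x y) a f b c,
      prod_comb hKJ (fun j x y => c1 q (Us j) x y) a' f' b' c]
    simp only [_root_.map_mul]
    ring
  rw [hL, hR, ← hmain]
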